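/- Let q be a positive power of an odd prime p, let k ≥ 1 be an integer, and let M_a, M_b, M_c be arbitrary k×k matrices over 𝔽_q. Then the assignments a ↦ U_a, b ↦ U_b, c ↦ U_c extend to a group homomorphism ρ_{M_a,M_b,M_c} : 𝒢_{Ã₂}(p) → SL_{3k}(𝔽_q). -/

import Mathlib

/-- The commutator [x,y] = x⁻¹y⁻¹xy (the convention used in the paper). -/
def pc {G : Type*} [Group G] (x y : G) : G := x⁻¹ * y⁻¹ * x * y

/-- The relators of the Kac–Moody–Steinberg group 𝒢_{Ã₂}(p):
a^p, b^p, c^p, [a,b,a], [a,b,b], [b,c,b], [b,c,c], [a,c,a], [a,c,c]. -/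
def kmsA2Rels (p : ℕ) : Set (FreeGroup (Fin 3)) :=
  let a : FreeGroup (Fin 3) := FreeGroup.of 0
  let b : FreeGroup (Fin 3) := FreeGroup.of 1
  let c : FreeGroup (Fin 3) := FreeGroup.of 2
  {a ^ p, b ^ p, c ^ p,
   pc (pc a b) a, pc (pc a b) b,
   pc (pc b c) b, pc (pc b c) c,
   pc (pc a c) a, pc (pc a c) c}

/-- The Kac–Moody–Steinberg group 𝒢_{Ã₂}(p). -/
abbrev KMSA2 (p : ℕ) : Type := PresentedGroup (kmsA2Rels p)

/-- An n×n block matrix with k×k blocks: identity blocks on the diagonal, and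
off-diagonal (i,j)-block `off i j`. -/
def blockOne {n k : ℕ} {F : Type*} [CommRing F]
    (off : Fin n → Fin n → Matrix (Fin k) (Fin k) F) :
    Matrix (Fin n × Fin k) (Fin n × Fin k) F :=
  fun x y =>
    if x.1 = y.1 then (1 : Matrix (Fin k) (Fin k) F) x.2 y.2
    else off x.1 y.1 x.2 y.2

/-- The 3k×3k matrix U_a: identity diagonal blocks, block (1,2) equal to M_a. -/
def Ua {k : ℕ} {F : Type*} [CommRing F] (Ma : Matrix (Fin k) (Fin k) F) :
    Matrix (Fin 3 × Fin k) (Fin 3 × Fin k) F :=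
  blockOne (fun i j => if i = 0 ∧ j = 1 then Ma else 0)

/-- The 3k×3k matrix U_b: identity diagonal blocks, block (2,3) equal to M_b. -/
def Ub {k : ℕ} {F : Type*} [CommRing F] (Mb : Matrix (Fin k) (Fin k) F) :
    Matrix (Fin 3 × Fin k) (Fin 3 × Fin k) F :=
  blockOne (fun i j => if i = 1 ∧ j = 2 then Mb else 0)

/-- The 3k×3k matrix U_c: identity diagonal blocks, block (3,1) equal to M_c. -/
def Uc {k : ℕ} {F : Type*} [CommRing F] (Mc : Matrix (Fin k) (Fin k) F) :
    Matrix (Fin 3 × Fin k) (Fin 3 × Fin k) F :=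
  blockOne (fun i j => if i = 2 ∧ j = 0 then Mc else 0)

section Aux

open Matrix Kronecker

variable {k : ℕ} {F : Type*} [Field F]

private lemma kmul (i j i' j' : Fin 3) (M M' : Matrix (Fin k) (Fin k) F) :
    (single i j (1:F) ⊗ₖ M) * (single i' j' (1:F) ⊗ₖ M') =
      if j = i' then single i j' (1:F) ⊗ₖ (M * M') else 0 := by
  rw [← Matrix.mul_kronecker_mul]
  split_ifs with h
  · subst h; rw [Matrix.single_mul_single_same, one_mul]
  · rw [Matrix.single_mul_single_of_ne (h := h), Matrix.zero_kronecker]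

private lemma Ua_eq (Ma : Matrix (Fin k) (Fin k) F) :
    Ua Ma = 1 + single (0:Fin 3) 1 (1:F) ⊗ₖ Ma := by
  ext ⟨x1, x2⟩ ⟨y1, y2⟩
  fin_cases x1 <;> fin_cases y1 <;>
    simp [Ua, blockOne, Matrix.one_apply, Matrix.kroneckerMap_apply, Matrix.single,
      Prod.ext_iff]

private lemma Ub_eq (Mb : Matrix (Fin k) (Fin k) F) :
    Ub Mb = 1 + single (1:Fin 3) 2 (1:F) ⊗ₖ Mb := by
  ext ⟨x1, x2⟩ ⟨y1, y2⟩
  fin_cases x1 <;> fin_cases y1 <;>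
    simp [Ub, blockOne, Matrix.one_apply, Matrix.kroneckerMap_apply, Matrix.single,
      Prod.ext_iff]

private lemma Uc_eq (Mc : Matrix (Fin k) (Fin k) F) :
    Uc Mc = 1 + single (2:Fin 3) 0 (1:F) ⊗ₖ Mc := by
  ext ⟨x1, x2⟩ ⟨y1, y2⟩
  fin_cases x1 <;> fin_cases y1 <;>
    simp [Uc, blockOne, Matrix.one_apply, Matrix.kroneckerMap_apply, Matrix.single,
      Prod.ext_iff]

private lemma one_add_pow (p : ℕ) [Fact p.Prime] [CharP F p] (hk : 1 ≤ k)
    (N : Matrix (Fin 3 × Fin k) (Fin 3 × Fin k) F)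
    (hN : N * N = 0) : (1 + N) ^ p = 1 := by
  haveI : NeZero k := ⟨by omega⟩
  have hp2 : 2 ≤ p := (Fact.out : p.Prime).two_le
  have hNp : N ^ p = 0 := by
    rw [show N ^ p = N ^ 2 * N ^ (p - 2) by rw [← pow_add]; congr 1; omega, pow_two, hN,
      zero_mul]
  have h1 := add_pow_char_of_commute (p := p) (h := Commute.one_left N)
  rw [h1, one_pow, hNp, add_zero]

private lemma det_one_add (p : ℕ) [Fact p.Prime] [CharP F p] (hk : 1 ≤ k)
    (N : Matrix (Fin 3 × Fin k) (Fin 3 × Fin k) F)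
    (hN : N * N = 0) : (1 + N).det = 1 := by
  have hd : (1 + N).det ^ p = 1 := by
    rw [← Matrix.det_pow, one_add_pow p hk N hN, Matrix.det_one]
  have h0 : ((1 + N).det - 1) ^ p = 0 := by
    rw [sub_pow_char, hd, one_pow, sub_self]
  have h1 := pow_eq_zero_iff (Fact.out : p.Prime).ne_zero |>.mp h0
  exact sub_eq_zero.mp h1

end Aux

private lemma pc_eq_of {G : Type*} [Group G] {x y d : G} (h : x * y = y * x * d) :
    pc x y = d := by
  simp only [pc, mul_assoc]
  rw [h]
  group

private lemma pc_eq_one {G : Type*} [Group G] {x y : G} (h : x * y = y * x) :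
    pc x y = 1 := pc_eq_of (by rw [h, mul_one])

private lemma lift_pc {α G : Type*} [Group G] (φ : FreeGroup α →* G) (x y : FreeGroup α) :
    φ (pc x y) = pc (φ x) (φ y) := by
  simp [pc, map_mul, map_inv]

/-- Let q = p^e be a positive power of an odd prime p, k ≥ 1, and M_a, M_b, M_c arbitrary
k×k matrices over 𝔽_q.  Then a ↦ U_a, b ↦ U_b, c ↦ U_c extend to a group homomorphism
𝒢_{Ã₂}(p) → SL_{3k}(𝔽_q). -/
theorem kmsA2_block_rep (p e k : ℕ) [Fact p.Prime] (hodd : Odd p) (he : 1 ≤ e)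
    (hk : 1 ≤ k)
    (Ma Mb Mc : Matrix (Fin k) (Fin k) (GaloisField p e)) :
    ∃ ρ : KMSA2 p →* Matrix.SpecialLinearGroup (Fin 3 × Fin k) (GaloisField p e),
      (↑(ρ (PresentedGroup.of 0)) : Matrix (Fin 3 × Fin k) (Fin 3 × Fin k)
          (GaloisField p e)) = Ua Ma ∧
      (↑(ρ (PresentedGroup.of 1)) : Matrix (Fin 3 × Fin k) (Fin 3 × Fin k)
          (GaloisField p e)) = Ub Mb ∧
      (↑(ρ (PresentedGroup.of 2)) : Matrix (Fin 3 × Fin k) (Fin 3 × Fin k)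
          (GaloisField p e)) = Uc Mc := by
  classical
  open Matrix Kronecker in
  set A : Matrix (Fin 3 × Fin k) (Fin 3 × Fin k) (GaloisField p e) := single (0:Fin 3) 1 (1:GaloisField p e) ⊗ₖ Ma
    with hA
  set B : Matrix (Fin 3 × Fin k) (Fin 3 × Fin k) (GaloisField p e) := single (1:Fin 3) 2 (1:GaloisField p e) ⊗ₖ Mb
    with hB
  set C : Matrix (Fin 3 × Fin k) (Fin 3 × Fin k) (GaloisField p e) := single (2:Fin 3) 0 (1:GaloisField p e) ⊗ₖ Mc
    with hC
  set D : Matrix (Fin 3 × Fin k) (Fin 3 × Fin k) (GaloisField p e) :=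
    single (0:Fin 3) 2 (1:GaloisField p e) ⊗ₖ (Ma * Mb) with hD
  set E : Matrix (Fin 3 × Fin k) (Fin 3 × Fin k) (GaloisField p e) :=
    single (1:Fin 3) 0 (1:GaloisField p e) ⊗ₖ (Mb * Mc) with hE
  set G : Matrix (Fin 3 × Fin k) (Fin 3 × Fin k) (GaloisField p e) :=
    -(single (2:Fin 3) 1 (1:GaloisField p e) ⊗ₖ (Mc * Ma)) with hG
  have hAA : A * A = 0 := by simp [hA, kmul]
  have hBB : B * B = 0 := by simp [hB, kmul]
  have hCC : C * C = 0 := by simp [hC, kmul]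
  have hDD : D * D = 0 := by simp [hD, kmul]
  have hEE : E * E = 0 := by simp [hE, kmul]
  have hGG : G * G = 0 := by simp [hG, kmul]
  -- the SL₃ₖ elements
  let sa : Matrix.SpecialLinearGroup (Fin 3 × Fin k) (GaloisField p e) :=
    ⟨Ua Ma, by rw [Ua_eq]; exact det_one_add p hk A hAA⟩
  let sb : Matrix.SpecialLinearGroup (Fin 3 × Fin k) (GaloisField p e) :=
    ⟨Ub Mb, by rw [Ub_eq]; exact det_one_add p hk B hBB⟩
  let sc : Matrix.SpecialLinearGroup (Fin 3 × Fin k) (GaloisField p e) :=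
    ⟨Uc Mc, by rw [Uc_eq]; exact det_one_add p hk C hCC⟩
  let dab : Matrix.SpecialLinearGroup (Fin 3 × Fin k) (GaloisField p e) := ⟨1 + D, det_one_add p hk D hDD⟩
  let dbc : Matrix.SpecialLinearGroup (Fin 3 × Fin k) (GaloisField p e) := ⟨1 + E, det_one_add p hk E hEE⟩
  let dac : Matrix.SpecialLinearGroup (Fin 3 × Fin k) (GaloisField p e) := ⟨1 + G, det_one_add p hk G hGG⟩
  -- group-level commutator computations
  have hab : pc sa sb = dab := by
    apply pc_eq_of
    apply Subtype.ext
    show Ua Ma * Ub Mb = Ub Mb * Ua Ma * (1 + D)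
    rw [Ua_eq, Ub_eq]
    simp [hA, hB, hD, mul_add, add_mul, kmul]
    abel
  have hbc : pc sb sc = dbc := by
    apply pc_eq_of
    apply Subtype.ext
    show Ub Mb * Uc Mc = Uc Mc * Ub Mb * (1 + E)
    rw [Ub_eq, Uc_eq]
    simp [hB, hC, hE, mul_add, add_mul, kmul]
    abel
  have hac : pc sa sc = dac := by
    apply pc_eq_of
    apply Subtype.ext
    show Ua Ma * Uc Mc = Uc Mc * Ua Ma * (1 + G)
    rw [Ua_eq, Uc_eq]
    simp [hG, hA, hC, mul_add, add_mul, mul_neg, neg_mul, kmul]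
    abel
  have hdab_a : pc dab sa = 1 := by
    apply pc_eq_one
    apply Subtype.ext
    show (1 + D) * Ua Ma = Ua Ma * (1 + D)
    rw [Ua_eq]
    simp [hA, hD, mul_add, add_mul, kmul]
    abel
  have hdab_b : pc dab sb = 1 := by
    apply pc_eq_one
    apply Subtype.ext
    show (1 + D) * Ub Mb = Ub Mb * (1 + D)
    rw [Ub_eq]
    simp [hB, hD, mul_add, add_mul, kmul]
    abel
  have hdbc_b : pc dbc sb = 1 := by
    apply pc_eq_one
    apply Subtype.ext
    show (1 + E) * Ub Mb = Ub Mb * (1 + E)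
    rw [Ub_eq]
    simp [hB, hE, mul_add, add_mul, kmul]
    abel
  have hdbc_c : pc dbc sc = 1 := by
    apply pc_eq_one
    apply Subtype.ext
    show (1 + E) * Uc Mc = Uc Mc * (1 + E)
    rw [Uc_eq]
    simp [hC, hE, mul_add, add_mul, kmul]
    abel
  have hdac_a : pc dac sa = 1 := by
    apply pc_eq_one
    apply Subtype.ext
    show (1 + G) * Ua Ma = Ua Ma * (1 + G)
    rw [Ua_eq]
    simp [hG, hA, mul_add, add_mul, mul_neg, neg_mul, kmul]
    abel
  have hdac_c : pc dac sc = 1 := by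
    apply pc_eq_one
    apply Subtype.ext
    show (1 + G) * Uc Mc = Uc Mc * (1 + G)
    rw [Uc_eq]
    simp [hG, hC, mul_add, add_mul, mul_neg, neg_mul, kmul]
    abel
  have hap : sa ^ p = 1 := by
    apply Subtype.ext
    rw [Matrix.SpecialLinearGroup.coe_pow]
    show (Ua Ma) ^ p = (1 : Matrix (Fin 3 × Fin k) (Fin 3 × Fin k) (GaloisField p e))
    rw [Ua_eq]; exact one_add_pow p hk A hAA
  have hbp : sb ^ p = 1 := by
    apply Subtype.ext
    rw [Matrix.SpecialLinearGroup.coe_pow]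
    show (Ub Mb) ^ p = (1 : Matrix (Fin 3 × Fin k) (Fin 3 × Fin k) (GaloisField p e))
    rw [Ub_eq]; exact one_add_pow p hk B hBB
  have hcp : sc ^ p = 1 := by
    apply Subtype.ext
    rw [Matrix.SpecialLinearGroup.coe_pow]
    show (Uc Mc) ^ p = (1 : Matrix (Fin 3 × Fin k) (Fin 3 × Fin k) (GaloisField p e))
    rw [Uc_eq]; exact one_add_pow p hk C hCC
  -- the homomorphism
  let f : Fin 3 → Matrix.SpecialLinearGroup (Fin 3 × Fin k) (GaloisField p e) := ![sa, sb, sc]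
  have hrels : ∀ r ∈ kmsA2Rels p, FreeGroup.lift f r = 1 := by
    intro r hr
    simp only [kmsA2Rels, Set.mem_insert_iff, Set.mem_singleton_iff] at hr
    rcases hr with h | h | h | h | h | h | h | h | h <;> subst h <;>
      simp only [map_pow, lift_pc, FreeGroup.lift_apply_of] <;>
      simp only [f, Matrix.cons_val_zero, Matrix.cons_val_one, Matrix.head_cons,
        Matrix.cons_val_two, Matrix.tail_cons]
    · exact hap
    · exact hbp
    · exact hcp
    · rw [hab]; exact hdab_a
    · rw [hab]; exact hdab_b
    · rw [hbc]; exact hdbc_b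
    · rw [hbc]; exact hdbc_c
    · rw [hac]; exact hdac_a
    · rw [hac]; exact hdac_c
  refine ⟨PresentedGroup.toGroup hrels, ?_, ?_, ?_⟩ <;>
      rw [PresentedGroup.toGroup.of] <;>
      simp only [f, Matrix.cons_val_zero, Matrix.cons_val_one, Matrix.head_cons,
        Matrix.cons_val_two, Matrix.tail_cons] <;> rfl
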